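/- Let G be a non-amenable bounded-degree connected graph. There exist constants T₀, δ₀, σ > 0 such that for every vertex x and every T ≥ T₀, the geometrically-killed random walk started at x with killing parameter T satisfies: with probability at least δ₀, the walk has length at least T and d(x, w(T)) ≥ σT. -/

import Mathlib

open MeasureTheory
open scoped ENNReal NNReal

lemma aux_third (T : ℕ) (hT : 1 ≤ T) : (1/3 : ℝ) ≤ ((T:ℝ)/(T+1))^T := by
  have ht : (0:ℝ) < T := by exact_mod_cast hT
  have h1 : ((T:ℝ)+1)/T = 1 + 1/T := by field_simp
  have h2 : (1 + 1/(T:ℝ))^T ≤ 3 := by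
    have hexp := Real.add_one_le_exp (1/(T:ℝ))
    calc (1+1/(T:ℝ))^T ≤ (Real.exp (1/T))^T :=
          pow_le_pow_left₀ (by positivity) (by linarith) T
      _ = Real.exp ((T:ℝ) * (1/T)) := (Real.exp_nat_mul _ T).symm
      _ = Real.exp 1 := by rw [mul_one_div, div_self ht.ne']
      _ ≤ 3 := by linarith [Real.exp_one_lt_d9]
  have hpos : (0:ℝ) < 1 + 1/T := by positivity
  have heq : (T:ℝ)/(T+1) = (1+1/(T:ℝ))⁻¹ := by rw [← h1, inv_div]
  rw [heq, inv_pow]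
  have := inv_anti₀ (pow_pos hpos T) h2
  calc (1/3 : ℝ) = 3⁻¹ := by norm_num
    _ ≤ ((1+1/(T:ℝ))^T)⁻¹ := inv_anti₀ (pow_pos hpos T) h2

/-- Speed lemma: on a non-amenable bounded-degree connected graph (encoded by the
ball-cardinality bound and the heat-kernel bound `P_x(w(n)=y) ≤ C ρ^n`, `ρ < 1`),
there are `T₀, δ₀, σ > 0` so that for every vertex `x` and every `T ≥ T₀`, the
geometrically-killed walk `P_x^{(T)}` satisfies: with probability at least `δ₀`,
its length is at least `T` and `d(x, w(T)) ≥ σT`. -/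
theorem stmt5 {V Ω : Type*} [MeasurableSpace Ω]
    (d : V → V → ℕ) (D : ℕ) (hD : 0 < D)
    (hball : ∀ (x : V) (r : ℕ),
      {y : V | d x y ≤ r}.Finite ∧ Nat.card {y : V | d x y ≤ r} ≤ 2 * D ^ r)
    (C ρ : ℝ) (hC : 0 < C) (hρ0 : 0 < ρ) (hρ1 : ρ < 1)
    (μ : V → ℕ → Measure Ω) (hprob : ∀ x T, IsProbabilityMeasure (μ x T))
    (len : Ω → ℕ) (pos : Ω → ℕ → V)
    (hkernel : ∀ (x : V) (T n : ℕ) (y : V),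
      μ x T {ω | pos ω n = y} ≤ ENNReal.ofReal (C * ρ ^ n))
    (hgeom : ∀ (x : V) (T : ℕ), 0 < T →
      μ x T {ω | T ≤ len ω} = ENNReal.ofReal (((T : ℝ) / (T + 1)) ^ T))
    (hindep : ∀ (x : V) (T n : ℕ) (A : Set V),
      μ x T ({ω | T ≤ len ω} ∩ {ω | pos ω n ∈ A})
        = μ x T {ω | T ≤ len ω} * μ x T {ω | pos ω n ∈ A}) :
    ∃ (T₀ : ℕ) (δ₀ σ : ℝ), 0 < δ₀ ∧ 0 < σ ∧
      ∀ (x : V) (T : ℕ), T₀ ≤ T →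
        ENNReal.ofReal δ₀
          ≤ μ x T ({ω | T ≤ len ω} ∩ {ω | σ * T ≤ (d x (pos ω T) : ℝ)}) := by
  have hD1 : (1:ℝ) ≤ D := by exact_mod_cast hD
  set q : ℝ := ρ ^ (2⁻¹ : ℝ) with hqdef
  have hq0 : 0 < q := Real.rpow_pos_of_pos hρ0 _
  have hq1 : q < 1 := Real.rpow_lt_one hρ0.le hρ1 (by norm_num)
  obtain ⟨N, hN⟩ := exists_pow_lt_of_lt_one (show (0:ℝ) < 1/(4*C) by positivity) hq1
  set σ : ℝ := Real.log ρ⁻¹ / (2 * Real.log ((D:ℝ)+2)) with hσdef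
  have hlogD : 0 < Real.log ((D:ℝ)+2) := Real.log_pos (by linarith)
  have hlogρ : 0 < Real.log ρ⁻¹ := Real.log_pos ((one_lt_inv₀ hρ0).mpr hρ1)
  have hσ : 0 < σ := by positivity
  refine ⟨max N 1, 1/6, σ, by norm_num, hσ, ?_⟩
  intro x T hT
  have hT1 : 1 ≤ T := le_trans (le_max_right N 1) hT
  have hTN : N ≤ T := le_trans (le_max_left N 1) hT
  have ht0 : (0:ℝ) < T := by exact_mod_cast hT1
  haveI := hprob x T
  set r : ℕ := ⌊σ * (T:ℝ)⌋₊ with hrdef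
  -- real estimate
  have hreal : 2 * (D:ℝ)^r * (C * ρ^T) ≤ 1/2 := by
    have hr : (r:ℝ) ≤ σ * T := Nat.floor_le (by positivity)
    have h1 : (D:ℝ)^r ≤ ((D:ℝ)+2) ^ (σ * (T:ℝ)) := by
      calc (D:ℝ)^r ≤ ((D:ℝ)+2)^r := pow_le_pow_left₀ (by positivity) (by linarith) r
        _ = ((D:ℝ)+2) ^ ((r:ℕ):ℝ) := (Real.rpow_natCast _ r).symm
        _ ≤ ((D:ℝ)+2) ^ (σ*(T:ℝ)) := Real.rpow_le_rpow_of_exponent_le (by linarith) hr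
    have h2 : ((D:ℝ)+2) ^ (σ * (T:ℝ)) = ρ⁻¹ ^ ((T:ℝ)/2) := by
      rw [Real.rpow_def_of_pos (by linarith), Real.rpow_def_of_pos (by positivity)]
      congr 1
      rw [hσdef]
      field_simp
    have h3 : ρ⁻¹ ^ ((T:ℝ)/2) * ρ^T = q^T := by
      rw [← Real.rpow_natCast ρ T, ← Real.rpow_natCast q T, hqdef,
        ← Real.rpow_mul hρ0.le,
        Real.inv_rpow hρ0.le, ← Real.rpow_neg hρ0.le, ← Real.rpow_add hρ0]
      congr 1
      ring
    have key : (D:ℝ)^r * ρ^T ≤ q^T := by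
      rw [← h3]
      exact mul_le_mul_of_nonneg_right (h1.trans_eq h2) (pow_pos hρ0 T).le
    have h4 : q^T ≤ q^N := pow_le_pow_of_le_one hq0.le hq1.le hTN
    have h5 : 2*C*(1/(4*C)) = 1/2 := by field_simp; ring
    nlinarith [pow_pos hρ0 T, pow_pos hq0 T, pow_pos hq0 N]
  -- ball bound
  obtain ⟨hfin, hcard⟩ := hball x r
  have hcardR : (hfin.toFinset.card : ℝ) ≤ 2 * (D:ℝ)^r := by
    have : hfin.toFinset.card ≤ 2 * D^r := by
      rwa [Nat.card_coe_set_eq, Set.ncard_eq_toFinset_card _ hfin] at hcard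
    exact_mod_cast this
  have hBmeas : μ x T {ω | pos ω T ∈ {y : V | d x y ≤ r}} ≤ ENNReal.ofReal (1/2) := by
    have hsub : {ω | pos ω T ∈ {y : V | d x y ≤ r}}
        ⊆ ⋃ y ∈ hfin.toFinset, {ω | pos ω T = y} := by
      intro ω hω
      simp only [Set.mem_iUnion]
      exact ⟨pos ω T, by simpa using hω, rfl⟩
    calc μ x T {ω | pos ω T ∈ {y : V | d x y ≤ r}}
        ≤ ∑ y ∈ hfin.toFinset, μ x T {ω | pos ω T = y} :=
          le_trans (measure_mono hsub) (measure_biUnion_finset_le _ _)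
      _ ≤ ∑ _y ∈ hfin.toFinset, ENNReal.ofReal (C * ρ^T) :=
          Finset.sum_le_sum fun y _ => hkernel x T T y
      _ = (hfin.toFinset.card : ℝ≥0∞) * ENNReal.ofReal (C*ρ^T) := by
          rw [Finset.sum_const, nsmul_eq_mul]
      _ ≤ ENNReal.ofReal (2*(D:ℝ)^r) * ENNReal.ofReal (C*ρ^T) := by
          refine mul_le_mul_left ?_ _
          rw [← ENNReal.ofReal_natCast]
          exact ENNReal.ofReal_le_ofReal hcardR
      _ = ENNReal.ofReal (2*(D:ℝ)^r*(C*ρ^T)) := (ENNReal.ofReal_mul (by positivity)).symm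
      _ ≤ ENNReal.ofReal (1/2) := ENNReal.ofReal_le_ofReal hreal
  -- complement bound
  have hhalf : ENNReal.ofReal (1/2) = (1/2 : ℝ≥0∞) := by
    rw [show (1/2:ℝ) = (2:ℝ)⁻¹ by norm_num, ENNReal.ofReal_inv_of_pos (by norm_num),
      ENNReal.ofReal_ofNat, one_div]
  have hcomp : ENNReal.ofReal (1/2) ≤ μ x T {ω | pos ω T ∈ {y : V | r < d x y}} := by
    have huniv : {ω | pos ω T ∈ {y : V | d x y ≤ r}}
        ∪ {ω | pos ω T ∈ {y : V | r < d x y}} = Set.univ := by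
      ext ω
      simp only [Set.mem_union, Set.mem_setOf_eq, Set.mem_univ, iff_true]
      exact le_or_gt (d x (pos ω T)) r
    have h1 : (1:ℝ≥0∞) ≤ μ x T {ω | pos ω T ∈ {y : V | d x y ≤ r}}
        + μ x T {ω | pos ω T ∈ {y : V | r < d x y}} := by
      rw [← measure_univ (μ := μ x T), ← huniv]
      exact measure_union_le _ _
    have h2 : (1:ℝ≥0∞) ≤ ENNReal.ofReal (1/2)
        + μ x T {ω | pos ω T ∈ {y : V | r < d x y}} :=
      le_trans h1 (add_le_add_left hBmeas _)
    have h3 : (1:ℝ≥0∞) - ENNReal.ofReal (1/2)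
        ≤ μ x T {ω | pos ω T ∈ {y : V | r < d x y}} :=
      tsub_le_iff_left.mpr h2
    have h4 : (1:ℝ≥0∞) - 1/2 = 1/2 := by
      have := ENNReal.sub_half (a := 1) ENNReal.one_ne_top
      simpa using this
    rw [hhalf]; rw [hhalf, h4] at h3; exact h3
  -- length bound
  have hlen : ENNReal.ofReal (1/3) ≤ μ x T {ω | T ≤ len ω} := by
    rw [hgeom x T hT1]
    exact ENNReal.ofReal_le_ofReal (aux_third T hT1)
  -- combine
  calc ENNReal.ofReal (1/6) = ENNReal.ofReal (1/3) * ENNReal.ofReal (1/2) := by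
        rw [← ENNReal.ofReal_mul (by norm_num)]; norm_num
    _ ≤ μ x T {ω | T ≤ len ω} * μ x T {ω | pos ω T ∈ {y : V | r < d x y}} :=
        mul_le_mul' hlen hcomp
    _ = μ x T ({ω | T ≤ len ω} ∩ {ω | pos ω T ∈ {y : V | r < d x y}}) :=
        (hindep x T T _).symm
    _ ≤ μ x T ({ω | T ≤ len ω} ∩ {ω | σ * T ≤ (d x (pos ω T) : ℝ)}) := by
        apply measure_mono
        apply Set.inter_subset_inter_right
        intro ω hω
        simp only [Set.mem_setOf_eq] at hω ⊢
        have h1 : σ * (T:ℝ) < r + 1 := Nat.lt_floor_add_one _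
        have h2 : (r:ℝ) + 1 ≤ (d x (pos ω T) : ℝ) := by exact_mod_cast hω
        linarith
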